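/- Let G be a connected simple graph on a vertex type V, and suppose its edge set is partitioned as G.edgeSet = A ∪ B with A and B disjoint and both nonempty. Then there exists a vertex v ∈ V, an edge e_A ∈ A and an edge e_B ∈ B such that v is an endpoint of e_A and v is an endpoint of e_B. -/
import Mathlib

private lemma aux_walk {V : Type*} (G : SimpleGraph V) (A B : Set (Sym2 V))
    (hpart : G.edgeSet = A ∪ B) :
    ∀ {u v : V} (_ : G.Walk u v) (eA : Sym2 V), eA ∈ A → u ∈ eA →
    ∀ eB : Sym2 V, eB ∈ B → v ∈ eB →
    ∃ (x : V) (fA fB : Sym2 V), fA ∈ A ∧ fB ∈ B ∧ x ∈ fA ∧ x ∈ fB := by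
  intro u v w
  induction w with
  | nil => intro eA hA hu eB hB hv; exact ⟨_, eA, eB, hA, hB, hu, hv⟩
  | @cons a b c h p ih =>
    intro eA hA hu eB hB hv
    have hmem : s(a, b) ∈ A ∪ B := hpart ▸ (G.mem_edgeSet.mpr h)
    cases hmem with
    | inl h' => exact ih s(a, b) h' (Sym2.mem_mk_right a b) eB hB hv
    | inr h' => exact ⟨a, eA, s(a, b), hA, h', hu, Sym2.mem_mk_left a b⟩

/-- if the edge set of a connected simple graph is partitioned into two disjoint
nonempty parts `A` and `B`, then some vertex is an endpoint of both an edge of `A` and an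
edge of `B`. -/
theorem exists_vertex_meeting_both_parts {V : Type*} (G : SimpleGraph V)
    (hG : G.Connected) (A B : Set (Sym2 V))
    (hpart : G.edgeSet = A ∪ B) (hdisj : Disjoint A B)
    (hA : A.Nonempty) (hB : B.Nonempty) :
    ∃ (v : V) (eA eB : Sym2 V), eA ∈ A ∧ eB ∈ B ∧ v ∈ eA ∧ v ∈ eB := by
  obtain ⟨eA, heA⟩ := hA
  obtain ⟨eB, heB⟩ := hB
  have hu : eA.out.1 ∈ eA := Sym2.out_fst_mem eA
  have hv : eB.out.1 ∈ eB := Sym2.out_fst_mem eB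
  obtain ⟨w⟩ := hG (eA.out.1) (eB.out.1)
  exact aux_walk G A B hpart w eA heA hu eB heB hv
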